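/- Let v : ℝ → ℝ be C² and satisfy v'' + (N-2)v' = -λ e^{v+2s} on ℝ with λ > 0 and N ≥ 3. Then the Lyapunov function L(s) = (v'(s)+2)²/2 + λ e^{v(s)+2s} - 2(N-2)(v(s)+2s) is non-increasing in s. -/

import Mathlib

theorem stmt_4 (N : ℕ) (hN : 3 ≤ N) (lam : ℝ) (hlam : 0 < lam)
    (v : ℝ → ℝ) (hv : ContDiff ℝ 2 v)
    (heq : ∀ s : ℝ,
      deriv (deriv v) s + ((N : ℝ) - 2) * deriv v s + lam * Real.exp (v s + 2 * s) = 0) :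
    Antitone (fun s : ℝ =>
      (deriv v s + 2) ^ 2 / 2 + lam * Real.exp (v s + 2 * s)
        - 2 * ((N : ℝ) - 2) * (v s + 2 * s)) := by
  have h2 : ContDiff ℝ ((1 : ℕ∞) + 1) v := hv
  rw [contDiff_succ_iff_deriv] at h2
  obtain ⟨hdv, -, hdv1⟩ := h2
  have hdv' : Differentiable ℝ (deriv v) := hdv1.differentiable (by simp)
  have key : ∀ s : ℝ, HasDerivAt (fun s : ℝ =>
      (deriv v s + 2) ^ 2 / 2 + lam * Real.exp (v s + 2 * s)
        - 2 * ((N : ℝ) - 2) * (v s + 2 * s))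
      (-((N : ℝ) - 2) * (deriv v s + 2) ^ 2) s := by
    intro s
    have h1 : HasDerivAt v (deriv v s) s := (hdv s).hasDerivAt
    have h2 : HasDerivAt (deriv v) (deriv (deriv v) s) s := (hdv' s).hasDerivAt
    have hA : HasDerivAt (fun s => (deriv v s + 2) ^ 2 / 2)
        ((deriv v s + 2) * deriv (deriv v) s) s := by
      have := ((h2.add_const 2).fun_pow 2).div_const 2
      exact this.congr_deriv (by ring)
    have hB : HasDerivAt (fun s => v s + 2 * s) (deriv v s + 2) s := by
      have := h1.fun_add ((hasDerivAt_id s).const_mul 2)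
      simpa using this
    have hC : HasDerivAt (fun s => lam * Real.exp (v s + 2 * s))
        (lam * (Real.exp (v s + 2 * s) * (deriv v s + 2))) s := by
      exact (hB.exp).const_mul lam
    have hD : HasDerivAt (fun s => 2 * ((N : ℝ) - 2) * (v s + 2 * s))
        (2 * ((N : ℝ) - 2) * (deriv v s + 2)) s := hB.const_mul _
    have := (hA.fun_add hC).fun_sub hD
    refine this.congr_deriv (Eq.symm ?_)
    have h := heq s
    linear_combination (-(deriv v s + 2)) * h
  have hdiff : Differentiable ℝ (fun s : ℝ =>
      (deriv v s + 2) ^ 2 / 2 + lam * Real.exp (v s + 2 * s)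
        - 2 * ((N : ℝ) - 2) * (v s + 2 * s)) := fun s => (key s).differentiableAt
  apply antitone_of_deriv_nonpos hdiff
  intro s
  rw [(key s).deriv]
  have : (2 : ℝ) ≤ (N : ℝ) := by exact_mod_cast Nat.le_of_lt hN
  nlinarith [sq_nonneg (deriv v s + 2)]
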